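/- Under the block Arnoldi/Petrov–Galerkin setting (orthonormal $\mathbf{U}_{j+1}=[\mathbf{U}_j,U_{j+1}]$ from Arnoldi on $(A,B)$ with $B=\mathbf{U}_jE_1R_B$, invertible $\mathbf{Z}_j^*\mathbf{U}_j$, $A_j := (\mathbf{Z}_j^*\mathbf{U}_j)^{-1}\mathbf{Z}_j^*A\mathbf{U}_j$), the Petrov–Galerkin residual $\mathrm{Res}_{B,j}(z) := B - (zI - A)\mathbf{U}_j(zI - A_j)^{-1}E_1R_B$ satisfies, for all $z$ outside the spectrum of $A_j$: $\mathrm{Res}_{B,j}(z) = [\Lambda(A)\circ B]\,\Lambda(z)^{-1}$, where $\Lambda$ is the monic block characteristic polynomial of $A_j$ with respect to $E_1 R_B$. -/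

import Mathlib

open Matrix Polynomial

abbrev Mat (s : ℕ) := Matrix (Fin s) (Fin s) ℂ

/-- The `(p,q)` block (of size `s × s`) of a `js × js` block matrix. -/
def blk {j s : ℕ} (H : Matrix (Fin j × Fin s) (Fin j × Fin s) ℂ) (p q : Fin j) :
    Mat s := Matrix.of fun a b => H (p, a) (q, b)

/-- The `i`-th block canonical vector `E_i = e_i ⊗ I_s`. -/
def blkE {j s : ℕ} (i : Fin j) : Matrix (Fin j × Fin s) (Fin s) ℂ :=
  Matrix.of fun pa b => if pa.1 = i ∧ pa.2 = b then 1 else 0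

/-- Block upper Hessenberg: all blocks strictly below the first subdiagonal vanish. -/
def BUH {j s : ℕ} (H : Matrix (Fin j × Fin s) (Fin j × Fin s) ℂ) : Prop :=
  ∀ p q : Fin j, (q : ℕ) + 1 < (p : ℕ) → blk H p q = 0

/-- The action `P(N) ∘ W := ∑ᵢ Nⁱ W Pᵢ` of a matrix polynomial on a block vector. -/
noncomputable def act {n : Type*} [Fintype n] [DecidableEq n] {s : ℕ}
    (P : Polynomial (Mat s)) (N : Matrix n n ℂ) (W : Matrix n (Fin s) ℂ) :
    Matrix n (Fin s) ℂ :=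
  ∑ i ∈ Finset.range (P.natDegree + 1), (N ^ i) * W * P.coeff i

/-- Evaluation of a matrix polynomial at a scalar: `P(z) = ∑ᵢ zⁱ Pᵢ`. -/
noncomputable def evalS {s : ℕ} (P : Polynomial (Mat s)) (z : ℂ) : Mat s :=
  ∑ i ∈ Finset.range (P.natDegree + 1), z ^ i • P.coeff i

/-- The subdiagonal block `Γ_i = H_{(i-1)(i-2)}` (paper indexing, `2 ≤ i ≤ j`),
with the convention `Γ_i = I` out of range (in particular `Γ₁ = I`). -/
noncomputable def Gam {j s : ℕ} (H : Matrix (Fin j × Fin s) (Fin j × Fin s) ℂ)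
    (i : ℕ) : Mat s :=
  if h : 2 ≤ i ∧ i ≤ j then blk H ⟨i - 1, by omega⟩ ⟨i - 2, by omega⟩ else 1

def colB {j s : ℕ} (W : Matrix (Fin j × Fin s) (Fin s) ℂ) (p : Fin j) : Mat s :=
  Matrix.of fun a b => W (p, a) b

lemma colB_mul {j s : ℕ} (M : Matrix (Fin j × Fin s) (Fin j × Fin s) ℂ)
    (W : Matrix (Fin j × Fin s) (Fin s) ℂ) (p : Fin j) :
    colB (M * W) p = ∑ r : Fin j, blk M p r * colB W r := by
  ext a b
  simp [colB, blk, Matrix.mul_apply, Matrix.sum_apply, Fintype.sum_prod_type]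

lemma colB_mul_right {j s : ℕ} (W : Matrix (Fin j × Fin s) (Fin s) ℂ)
    (X : Mat s) (p : Fin j) : colB (W * X) p = colB W p * X := by
  ext a b
  simp [colB, Matrix.mul_apply]

lemma colB_blkE {j s : ℕ} (i p : Fin j) :
    colB (blkE (s := s) i) p = if p = i then 1 else 0 := by
  ext a b
  by_cases h : p = i <;> simp [colB, blkE, Matrix.one_apply, h]

lemma conjTranspose_blkE_mul {j s : ℕ} (i : Fin j)
    (W : Matrix (Fin j × Fin s) (Fin s) ℂ) :
    (blkE (s := s) i)ᴴ * W = colB W i := by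
  ext a b
  simp only [Matrix.mul_apply, Matrix.conjTranspose_apply, blkE, colB, Matrix.of_apply,
    Fintype.sum_prod_type]
  rw [Finset.sum_eq_single i]
  · simp
  · intro r _ hr; simp [hr]
  · simp

lemma blk_mul_conjTranspose_blkE {j s : ℕ} (W : Matrix (Fin j × Fin s) (Fin s) ℂ)
    (i p q : Fin j) :
    blk (W * (blkE (s := s) i)ᴴ) p q = if q = i then colB W p else 0 := by
  ext a b
  simp only [blk, Matrix.mul_apply, Matrix.conjTranspose_apply, blkE, Matrix.of_apply, colB]
  by_cases h : q = i
  · subst h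
    rw [Finset.sum_eq_single b] <;> simp +contextual [eq_comm]
  · simp [h]

lemma blk_add {j s : ℕ} (M N : Matrix (Fin j × Fin s) (Fin j × Fin s) ℂ) (p q : Fin j) :
    blk (M + N) p q = blk M p q + blk N p q := rfl

lemma colB_pow_blkE_eq_zero {j s : ℕ} {M : Matrix (Fin j × Fin s) (Fin j × Fin s) ℂ}
    (hM : BUH M) : ∀ (k : ℕ) (p q : Fin j), (q : ℕ) + k < (p : ℕ) →
      colB (M ^ k * blkE (s := s) q) p = 0 := by
  intro k
  induction k with
  | zero =>
    intro p q h
    rw [pow_zero, Matrix.one_mul, colB_blkE, if_neg]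
    intro he; subst he; omega
  | succ k ih =>
    intro p q h
    rw [pow_succ', Matrix.mul_assoc, colB_mul]
    apply Finset.sum_eq_zero
    intro r _
    by_cases hr : (r : ℕ) + 1 < (p : ℕ)
    · rw [hM p r hr, zero_mul]
    · rw [ih r q (by omega), mul_zero]

lemma colB_pow_blkE_isUnit {j s : ℕ} (hj : 0 < j)
    {M : Matrix (Fin j × Fin s) (Fin j × Fin s) ℂ} (hM : BUH M)
    (hs : ∀ (k : ℕ) (h : k + 1 < j), IsUnit (blk M ⟨k + 1, h⟩ ⟨k, by omega⟩)) :
    ∀ (k : ℕ) (h : k < j), IsUnit (colB (M ^ k * blkE (s := s) (⟨0, hj⟩ : Fin j)) ⟨k, h⟩) := by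
  intro k
  induction k with
  | zero =>
    intro h
    rw [pow_zero, Matrix.one_mul, colB_blkE, if_pos rfl]
    exact isUnit_one
  | succ k ih =>
    intro h
    rw [pow_succ', Matrix.mul_assoc, colB_mul]
    rw [Finset.sum_eq_single (⟨k, by omega⟩ : Fin j)]
    · exact (hs k h).mul (ih (by omega))
    · intro r _ hr
      by_cases hrk : (r : ℕ) < k
      · rw [hM _ r (by simp; omega), zero_mul]
      · have : (k : ℕ) < (r : ℕ) := by
          rcases Nat.lt_or_ge k r with h1 | h1
          · exact h1
          · exfalso; apply hr; apply Fin.ext; simp; omega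
        rw [colB_pow_blkE_eq_zero hM k r ⟨0, hj⟩ (by simp; omega), mul_zero]
    · simp

set_option maxHeartbeats 1000000 in
/-- the Petrov–Galerkin residual satisfies
`Res_{B,j}(z) = [Λ(A)∘B] Λ(z)⁻¹` where `Λ` is the monic block characteristic
polynomial of `A_j` with respect to `E₁ R_B`. -/
theorem residual_char_poly_formula {n j s : ℕ} (hj : 0 < j)
    (A : Matrix (Fin n) (Fin n) ℂ)
    (U Z : Matrix (Fin n) (Fin j × Fin s) ℂ)
    (u : Matrix (Fin n) (Fin s) ℂ)
    (Hj : Matrix (Fin j × Fin s) (Fin j × Fin s) ℂ) (Γ : Mat s)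
    (harn : A * U = U * Hj + u * Γ * (blkE (s := s) (⟨j - 1, by omega⟩ : Fin j))ᴴ)
    (hU : Uᴴ * U = 1) (hu : uᴴ * u = 1) (hUu : Uᴴ * u = 0)
    (hBUH : BUH Hj)
    (hsub : ∀ i : ℕ, 2 ≤ i → i ≤ j → IsUnit (Gam Hj i)) (hΓ : IsUnit Γ)
    (hZ : Zᴴ * Z = 1) (hZU : IsUnit (Zᴴ * U))
    (RB : Mat s) (hRB : IsUnit RB)
    (B : Matrix (Fin n) (Fin s) ℂ)
    (hB : B = U * blkE (s := s) (⟨0, hj⟩ : Fin j) * RB)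
    (Aj : Matrix (Fin j × Fin s) (Fin j × Fin s) ℂ)
    (hAj : Aj = (Zᴴ * U)⁻¹ * (Zᴴ * A * U))
    (Λ : Polynomial (Mat s)) (hmonic : Λ.Monic) (hdeg : Λ.natDegree = j)
    (hann : act Λ Aj (blkE (s := s) (⟨0, hj⟩ : Fin j) * RB) = 0)
    (z : ℂ)
    (hz : (z • (1 : Matrix (Fin j × Fin s) (Fin j × Fin s) ℂ) - Aj).det ≠ 0) :
    B - (z • (1 : Matrix (Fin n) (Fin n) ℂ) - A) *
        (U * ((z • (1 : Matrix (Fin j × Fin s) (Fin j × Fin s) ℂ) - Aj)⁻¹ *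
          blkE (s := s) (⟨0, hj⟩ : Fin j) * RB)) =
      act Λ A B * (evalS Λ z)⁻¹ := by
  have hj1 : j - 1 < j := by omega
  set E1R : Matrix (Fin j × Fin s) (Fin s) ℂ := blkE (s := s) (⟨0, hj⟩ : Fin j) * RB
    with hE1R
  set Ej : Matrix (Fin j × Fin s) (Fin s) ℂ := blkE (s := s) (⟨j - 1, hj1⟩ : Fin j) with hEj
  set G : Matrix (Fin j × Fin s) (Fin s) ℂ := (Zᴴ * U)⁻¹ * (Zᴴ * u) with hG
  have hZUdet : IsUnit (Zᴴ * U).det := (Matrix.isUnit_iff_isUnit_det _).mp hZU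
  have hZUinv : (Zᴴ * U)⁻¹ * (Zᴴ * U) = 1 := Matrix.nonsing_inv_mul _ hZUdet
  have harn' : A * U = U * Hj + u * Γ * Ejᴴ := harn
  have hAjH : Aj = Hj + G * Γ * Ejᴴ := by
    rw [hAj, Matrix.mul_assoc Zᴴ A U, harn', Matrix.mul_add, Matrix.mul_add]
    congr 1
    · rw [← Matrix.mul_assoc Zᴴ U Hj, ← Matrix.mul_assoc, hZUinv, Matrix.one_mul]
    · rw [hG]; simp only [Matrix.mul_assoc]
  have hBUHAj : BUH Aj := by
    intro p q hpq
    rw [hAjH, blk_add, hBUH p q hpq, blk_mul_conjTranspose_blkE, if_neg, add_zero]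
    intro he
    have hp := p.isLt
    have := congrArg Fin.val he
    simp only [Fin.val_mk] at this
    omega
  have hsubAj : ∀ (k : ℕ) (h : k + 1 < j), IsUnit (blk Aj ⟨k + 1, h⟩ ⟨k, by omega⟩) := by
    intro k h
    rw [hAjH, blk_add, blk_mul_conjTranspose_blkE, if_neg, add_zero]
    · have h2 := hsub (k + 2) (by omega) (by omega)
      rw [Gam, dif_pos ⟨by omega, by omega⟩] at h2
      convert h2 using 3 <;> omega
    · intro he
      have := congrArg Fin.val he
      simp only [Fin.val_mk] at this
      omega
  have hcol : ∀ i : ℕ, i < j - 1 → Ejᴴ * (Aj ^ i * E1R) = 0 := by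
    intro i hi
    rw [hEj, hE1R, conjTranspose_blkE_mul, ← Matrix.mul_assoc, colB_mul_right,
      colB_pow_blkE_eq_zero hBUHAj i _ _ (by simp only [Fin.val_mk]; omega), Matrix.zero_mul]
  have hstep : ∀ X : Matrix (Fin j × Fin s) (Fin s) ℂ,
      A * (U * X) = U * (Aj * X) + (u - U * G) * (Γ * (Ejᴴ * X)) := by
    intro X
    rw [← Matrix.mul_assoc A U X, harn', hAjH]
    simp only [Matrix.add_mul, Matrix.sub_mul, Matrix.mul_add, Matrix.mul_assoc]
    abel
  have hpow : ∀ i : ℕ, i < j → A ^ i * (U * E1R) = U * (Aj ^ i * E1R) := by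
    intro i
    induction i with
    | zero => intro _; rw [pow_zero, pow_zero, Matrix.one_mul, Matrix.one_mul]
    | succ i ih =>
      intro hij
      rw [pow_succ', Matrix.mul_assoc, ih (by omega), hstep, hcol i (by omega),
        Matrix.mul_zero, Matrix.mul_zero, add_zero, ← Matrix.mul_assoc Aj (Aj ^ i) E1R, ← pow_succ']
  set Q : Mat s := Ejᴴ * (Aj ^ (j - 1) * E1R) with hQdef
  have hpowj : A ^ j * (U * E1R) = U * (Aj ^ j * E1R) + (u - U * G) * (Γ * Q) := by
    have e1 : A ^ j = A * A ^ (j - 1) := by rw [← pow_succ']; congr 1; omega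
    have e2 : Aj ^ j = Aj * Aj ^ (j - 1) := by rw [← pow_succ']; congr 1; omega
    rw [e1, e2, Matrix.mul_assoc, hpow (j - 1) hj1, hstep, Matrix.mul_assoc]
  have hcoeffj : Λ.coeff j = 1 := by rw [← hdeg]; exact hmonic.coeff_natDegree
  have hBr : B = U * E1R := by rw [hB, hE1R, Matrix.mul_assoc]
  have hann' : ∑ i ∈ Finset.range (j + 1), Aj ^ i * E1R * Λ.coeff i = 0 := by
    have h := hann
    unfold act at h
    rwa [hdeg] at h
  have hact : act Λ A B = (u - U * G) * (Γ * Q) := by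
    have hs : ∑ i ∈ Finset.range j, A ^ i * (U * E1R) * Λ.coeff i
        = ∑ i ∈ Finset.range j, U * (Aj ^ i * E1R) * Λ.coeff i :=
      Finset.sum_congr rfl fun i hi => by rw [hpow i (Finset.mem_range.mp hi)]
    calc act Λ A B = ∑ i ∈ Finset.range (j + 1), A ^ i * (U * E1R) * Λ.coeff i := by
          unfold act; rw [hdeg, hBr]
      _ = (∑ i ∈ Finset.range (j + 1), U * (Aj ^ i * E1R) * Λ.coeff i)
            + (u - U * G) * (Γ * Q) := by
          rw [Finset.sum_range_succ, Finset.sum_range_succ, hcoeffj, Matrix.mul_one,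
            Matrix.mul_one, hpowj, hs, add_assoc]
      _ = U * (∑ i ∈ Finset.range (j + 1), Aj ^ i * E1R * Λ.coeff i)
            + (u - U * G) * (Γ * Q) := by
          rw [Matrix.mul_sum]
          congr 1
          exact Finset.sum_congr rfl fun i _ => by rw [Matrix.mul_assoc]
      _ = (u - U * G) * (Γ * Q) := by rw [hann', Matrix.mul_zero, zero_add]
  set S : Matrix (Fin j × Fin s) (Fin j × Fin s) ℂ :=
    z • (1 : Matrix (Fin j × Fin s) (Fin j × Fin s) ℂ) - Aj with hS
  have hzU : IsUnit S.det := isUnit_iff_ne_zero.mpr hz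
  have hcomm : Commute (z • (1 : Matrix (Fin j × Fin s) (Fin j × Fin s) ℂ)) Aj :=
    (Commute.one_left Aj).smul_left z
  have hgeom : ∀ i : ℕ, S⁻¹ * (z ^ i • E1R)
      = S⁻¹ * (Aj ^ i * E1R)
        + (∑ k ∈ Finset.range i,
            (z • (1 : Matrix (Fin j × Fin s) (Fin j × Fin s) ℂ)) ^ k * Aj ^ (i - 1 - k)) * E1R := by
    intro i
    have h := hcomm.mul_geom_sum₂ i
    rw [← hS] at h
    have h2 : z ^ i • E1R = Aj ^ i * E1R
        + S * ((∑ k ∈ Finset.range i,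
            (z • (1 : Matrix (Fin j × Fin s) (Fin j × Fin s) ℂ)) ^ k * Aj ^ (i - 1 - k)) * E1R) := by
      rw [← Matrix.mul_assoc S _ E1R, h, Matrix.sub_mul, _root_.smul_pow, one_pow, Matrix.smul_mul,
        Matrix.one_mul]
      abel
    rw [h2, Matrix.mul_add, ← Matrix.mul_assoc S⁻¹ S, Matrix.nonsing_inv_mul _ hzU,
      Matrix.one_mul]
  have hresolv : Ejᴴ * (S⁻¹ * E1R) * evalS Λ z = Q := by
    have e1 : Ejᴴ * (S⁻¹ * E1R) * evalS Λ z
        = ∑ i ∈ Finset.range (j + 1), Ejᴴ * (S⁻¹ * (z ^ i • E1R)) * Λ.coeff i := by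
      unfold evalS
      rw [hdeg, Matrix.mul_sum]
      exact Finset.sum_congr rfl fun i _ => by
        simp only [Matrix.mul_smul, Matrix.smul_mul]
    have e3 : ∀ i ∈ Finset.range (j + 1), Ejᴴ * (S⁻¹ * (z ^ i • E1R)) * Λ.coeff i
        = Ejᴴ * (S⁻¹ * (Aj ^ i * E1R)) * Λ.coeff i
          + Ejᴴ * ((∑ k ∈ Finset.range i,
              (z • (1 : Matrix (Fin j × Fin s) (Fin j × Fin s) ℂ)) ^ k * Aj ^ (i - 1 - k)) * E1R)
              * Λ.coeff i := fun i _ => by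
      rw [hgeom i, Matrix.mul_add, Matrix.add_mul]
    have e4 : ∑ i ∈ Finset.range (j + 1), Ejᴴ * (S⁻¹ * (Aj ^ i * E1R)) * Λ.coeff i = 0 := by
      have h : ∀ i ∈ Finset.range (j + 1), Ejᴴ * (S⁻¹ * (Aj ^ i * E1R)) * Λ.coeff i
          = Ejᴴ * S⁻¹ * (Aj ^ i * E1R * Λ.coeff i) := fun i _ => by
        simp only [Matrix.mul_assoc]
      rw [Finset.sum_congr rfl h, ← Matrix.mul_sum, hann', Matrix.mul_zero]
    have e5 : ∀ i ∈ Finset.range (j + 1),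
        Ejᴴ * ((∑ k ∈ Finset.range i,
            (z • (1 : Matrix (Fin j × Fin s) (Fin j × Fin s) ℂ)) ^ k * Aj ^ (i - 1 - k)) * E1R)
            * Λ.coeff i
        = if i = j then Q else 0 := by
      intro i hi
      have hi' : i ≤ j := by
        have := Finset.mem_range.mp hi; omega
      rw [Matrix.sum_mul, Matrix.mul_sum, Matrix.sum_mul]
      have hterm : ∀ k : ℕ, k < i → i - 1 - k < j - 1 →
          Ejᴴ * ((z • (1 : Matrix (Fin j × Fin s) (Fin j × Fin s) ℂ)) ^ k
            * Aj ^ (i - 1 - k) * E1R) * Λ.coeff i = 0 := by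
        intro k hk hm
        simp only [_root_.smul_pow, one_pow, Matrix.smul_mul, Matrix.mul_smul, Matrix.one_mul]
        rw [hcol _ hm, Matrix.zero_mul, smul_zero]
      by_cases hij : i = j
      · subst hij
        rw [if_pos rfl, Finset.sum_eq_single 0]
        · rw [pow_zero, Matrix.one_mul, Nat.sub_zero, hcoeffj, Matrix.mul_one, hQdef]
        · intro k hk hk0
          have hk' := Finset.mem_range.mp hk
          exact hterm k hk' (by omega)
        · intro h0
          exfalso; apply h0; exact Finset.mem_range.mpr (by omega)
      · rw [if_neg hij]
        apply Finset.sum_eq_zero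
        intro k hk
        have hk' := Finset.mem_range.mp hk
        exact hterm k hk' (by omega)
    rw [e1, Finset.sum_congr rfl e3, Finset.sum_add_distrib, e4, zero_add,
      Finset.sum_congr rfl e5, Finset.sum_ite_eq' (Finset.range (j + 1)) j fun _ => Q,
      if_pos (Finset.mem_range.mpr (by omega))]
  have hQ : IsUnit Q := by
    have h1 : Q = colB (Aj ^ (j - 1) * blkE (s := s) (⟨0, hj⟩ : Fin j)) ⟨j - 1, hj1⟩ * RB := by
      rw [hQdef, hEj, hE1R, conjTranspose_blkE_mul, ← Matrix.mul_assoc, colB_mul_right]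
    rw [h1]
    exact (colB_pow_blkE_isUnit hj hBUHAj hsubAj (j - 1) hj1).mul hRB
  have hdetE : (evalS Λ z).det ≠ 0 := by
    intro h0
    have h := congrArg Matrix.det hresolv
    rw [Matrix.det_mul, h0, mul_zero] at h
    exact ((Matrix.isUnit_iff_isUnit_det Q).mp hQ).ne_zero h.symm
  have hdetE' : IsUnit (evalS Λ z).det := isUnit_iff_ne_zero.mpr hdetE
  have hEjS : Ejᴴ * (S⁻¹ * E1R) = Q * (evalS Λ z)⁻¹ := by
    calc Ejᴴ * (S⁻¹ * E1R)
        = Ejᴴ * (S⁻¹ * E1R) * (evalS Λ z * (evalS Λ z)⁻¹) := by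
          rw [Matrix.mul_nonsing_inv _ hdetE', Matrix.mul_one]
      _ = Q * (evalS Λ z)⁻¹ := by rw [← Matrix.mul_assoc, hresolv]
  have hzAU : (z • (1 : Matrix (Fin n) (Fin n) ℂ) - A) * U
      = U * S - (u - U * G) * (Γ * Ejᴴ) := by
    rw [hS, Matrix.sub_mul, Matrix.smul_mul, Matrix.one_mul, harn', Matrix.mul_sub,
      Matrix.mul_smul, Matrix.mul_one, hAjH]
    simp only [Matrix.mul_add, Matrix.add_mul, Matrix.sub_mul, Matrix.mul_assoc]
    abel
  have hgoal2 : S⁻¹ * blkE (s := s) (⟨0, hj⟩ : Fin j) * RB = S⁻¹ * E1R := by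
    rw [hE1R, Matrix.mul_assoc]
  conv_lhs => rw [hBr, hgoal2]
  calc U * E1R - (z • (1 : Matrix (Fin n) (Fin n) ℂ) - A) * (U * (S⁻¹ * E1R))
      = U * E1R - (U * S - (u - U * G) * (Γ * Ejᴴ)) * (S⁻¹ * E1R) := by
        rw [← Matrix.mul_assoc (z • (1 : Matrix (Fin n) (Fin n) ℂ) - A) U (S⁻¹ * E1R), hzAU]
    _ = U * E1R - U * (S * (S⁻¹ * E1R)) + (u - U * G) * (Γ * (Ejᴴ * (S⁻¹ * E1R))) := by
        simp only [Matrix.sub_mul, Matrix.mul_assoc]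
        abel
    _ = (u - U * G) * (Γ * (Ejᴴ * (S⁻¹ * E1R))) := by
        rw [← Matrix.mul_assoc S, Matrix.mul_nonsing_inv _ hzU, Matrix.one_mul, sub_self,
          zero_add]
    _ = act Λ A B * (evalS Λ z)⁻¹ := by
        rw [hEjS, hact]
        simp only [Matrix.mul_assoc]
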